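/- Let U be a finite abelian group and F ≤ U a subgroup, and let ℓ ≥ 1. The number of subgroups V with F ≤ V ≤ U for which there exists a chain V = V_0 ≤ V_1 ≤ ... ≤ V_ℓ = U with each quotient V_i/V_{i−1} cyclic, is at most [U : F]^ℓ. -/

import Mathlib

namespace CoPolyAux

variable {U : Type*} [CommGroup U] [Finite U]

lemma enough (A : Type*) [CommGroup A] [Finite A] :
    HasEnoughRootsOfUnity ℂ (Monoid.exponent A) := by
  have h : (Monoid.exponent A : ℂ) ≠ 0 := by
    exact_mod_cast Monoid.exponent_ne_zero_of_finite (G := A)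
  have : NeZero ((Monoid.exponent A : ℂ)) := ⟨h⟩
  infer_instance

/-- The annihilator of a subgroup in the dual group. -/
def perp (V : Subgroup U) : Subgroup (U →* ℂˣ) where
  carrier := {φ | ∀ u ∈ V, φ u = 1}
  one_mem' := fun u _ => rfl
  mul_mem' := by
    intro a b ha hb u hu
    simp [ha u hu, hb u hu]
  inv_mem' := by
    intro a ha u hu
    simp [ha u hu]

lemma mem_perp {V : Subgroup U} {φ : U →* ℂˣ} : φ ∈ perp V ↔ ∀ u ∈ V, φ u = 1 := Iff.rfl

lemma perp_antitone {V W : Subgroup U} (h : V ≤ W) : perp W ≤ perp V :=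
  fun _ hφ u hu => hφ u (h hu)

lemma perp_top : perp (⊤ : Subgroup U) = ⊥ := by
  ext φ
  simp only [mem_perp, Subgroup.mem_bot]
  constructor
  · intro h; exact DFunLike.ext _ _ fun u => h u trivial
  · rintro rfl u _; rfl

lemma sep {V : Subgroup U} {u : U} (hu : u ∉ V) : ∃ φ ∈ perp V, φ u ≠ 1 := by
  have := enough (U ⧸ V)
  have h1 : (QuotientGroup.mk' V) u ≠ 1 := by
    simpa [QuotientGroup.eq_one_iff] using hu
  obtain ⟨ψ, hψ⟩ := CommGroup.exists_apply_ne_one_of_hasEnoughRootsOfUnity (U ⧸ V) ℂ h1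
  refine ⟨ψ.comp (QuotientGroup.mk' V), ?_, hψ⟩
  intro x hx
  have : (QuotientGroup.mk' V) x = 1 := (QuotientGroup.eq_one_iff x).mpr hx
  simp [MonoidHom.comp_apply, this]

lemma le_of_perp_le {V W : Subgroup U} (h : perp W ≤ perp V) : V ≤ W := by
  intro u hu
  by_contra hW
  obtain ⟨φ, hφW, hφu⟩ := sep hW
  exact hφu (h hφW u hu)

lemma perp_inj : Function.Injective (perp (U := U)) := fun V W h =>
  le_antisymm (le_of_perp_le h.ge) (le_of_perp_le h.le)

lemma card_perp (F : Subgroup U) : Nat.card (perp F) = F.index := by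
  have := enough (U ⧸ F)
  obtain ⟨e⟩ := CommGroup.monoidHom_mulEquiv_of_hasEnoughRootsOfUnity (U ⧸ F) ℂ
  have hcard : Nat.card ((U ⧸ F) →* ℂˣ) = F.index := by
    rw [Nat.card_congr e.toEquiv]; rfl
  rw [← hcard]
  refine Nat.card_congr (Equiv.symm ?_)
  refine ⟨fun ψ => ⟨ψ.comp (QuotientGroup.mk' F), fun u hu => ?_⟩,
    fun φ => QuotientGroup.lift F φ.1 (fun x hx => φ.2 x hx), ?_, ?_⟩
  · have : (QuotientGroup.mk' F) u = 1 := (QuotientGroup.eq_one_iff u).mpr hu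
    simp [MonoidHom.comp_apply, this]
  · intro ψ
    ext q
    simp
    rfl
  · intro φ
    apply Subtype.ext
    ext x
    simp
    rfl

set_option maxHeartbeats 1000000 in
lemma step {V W : Subgroup U} (hVW : V ≤ W) (hc : IsCyclic (W ⧸ V.subgroupOf W)) :
    ∃ g ∈ perp V, perp V ≤ perp W ⊔ Subgroup.closure {g} := by
  set Q := W ⧸ V.subgroupOf W with hQ
  have := enough Q
  obtain ⟨e⟩ := CommGroup.monoidHom_mulEquiv_of_hasEnoughRootsOfUnity Q ℂ
  have hcyc : IsCyclic (Q →* ℂˣ) := isCyclic_of_surjective e.symm e.symm.surjective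
  let ρ : ↥(perp V) →* (Q →* ℂˣ) :=
    { toFun := fun φ => QuotientGroup.lift (V.subgroupOf W)
        ((φ : U →* ℂˣ).comp W.subtype) (fun x hx => φ.2 x hx)
      map_one' := by
        ext q
        simp
      map_mul' := by
        intro a b
        ext q
        simp
        rfl }
    
  have hker : ∀ ψ : ↥(perp V), ρ ψ = 1 → (ψ : U →* ℂˣ) ∈ perp W := by
    intro ψ h u hu
    have h2 := DFunLike.congr_fun h (QuotientGroup.mk (⟨u, hu⟩ : W))
    exact h2
  obtain ⟨⟨y, g0, hg0⟩, hy⟩ := IsCyclic.exists_generator (α := ρ.range)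
  refine ⟨(g0 : U →* ℂˣ), g0.2, ?_⟩
  intro φ hφ
  obtain ⟨k, hk⟩ := Subgroup.mem_zpowers_iff.mp (hy ⟨ρ ⟨φ, hφ⟩, ⟨φ, hφ⟩, rfl⟩)
  have hk' : (ρ g0) ^ k = ρ ⟨φ, hφ⟩ := by
    have := congrArg (Subtype.val) hk
    simpa [hg0] using this
  have hmem : ((⟨φ, hφ⟩ / g0 ^ k : ↥(perp V)) : U →* ℂˣ) ∈ perp W := by
    apply hker
    rw [map_div, map_zpow, hk', div_self']
  have hsplit : φ = ((⟨φ, hφ⟩ / g0 ^ k : ↥(perp V)) : U →* ℂˣ) * (g0 : U →* ℂˣ) ^ k := by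
    push_cast
    simp
  have h1 : ((⟨φ, hφ⟩ / g0 ^ k : ↥(perp V)) : U →* ℂˣ)
      ∈ perp W ⊔ Subgroup.closure {(g0 : U →* ℂˣ)} :=
    Subgroup.mem_sup_left hmem
  have h2 : (g0 : U →* ℂˣ) ^ k ∈ perp W ⊔ Subgroup.closure {(g0 : U →* ℂˣ)} :=
    Subgroup.mem_sup_right
      (Subgroup.zpow_mem _ (Subgroup.subset_closure (Set.mem_singleton _)) k)
  rw [hsplit]
  exact mul_mem h1 h2

lemma chain_gen (n : ℕ) : ∀ (c : Fin (n + 1) → Subgroup U), Monotone c →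
    c (Fin.last n) = ⊤ →
    (∀ i : Fin n, IsCyclic (↥(c i.succ) ⧸ (c i.castSucc).subgroupOf (c i.succ))) →
    ∃ g : Fin n → (U →* ℂˣ), (∀ i, g i ∈ perp (c 0)) ∧
      perp (c 0) = Subgroup.closure (Set.range g) := by
  induction n with
  | zero =>
    intro c _ htop _
    refine ⟨Fin.elim0, fun i => i.elim0, ?_⟩
    have h0 : c 0 = ⊤ := htop
    rw [h0, perp_top, Set.range_eq_empty, Subgroup.closure_empty]
  | succ n ih =>
    intro c hmono htop hcyc
    set c' : Fin (n + 1) → Subgroup U := fun i => c i.succ with hc'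
    have hmono' : Monotone c' := fun i j h => hmono (Fin.succ_le_succ_iff.mpr h)
    have htop' : c' (Fin.last n) = ⊤ := by
      rw [hc']
      simpa [Fin.succ_last] using htop
    have hcyc' : ∀ i : Fin n,
        IsCyclic (↥(c' i.succ) ⧸ (c' i.castSucc).subgroupOf (c' i.succ)) := by
      intro i
      have h1 : (i.castSucc).succ = (i.succ).castSucc := Fin.succ_castSucc i
      have := hcyc i.succ
      rw [← h1] at this
      exact this
    obtain ⟨g', hg'mem, hg'⟩ := ih c' hmono' htop' hcyc'
    have h01 : c (0 : Fin (n + 1)).castSucc ≤ c (0 : Fin (n + 1)).succ :=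
      hmono (Fin.castSucc_lt_succ : (0 : Fin (n + 1)).castSucc < _).le
    obtain ⟨g0, hg0mem, hstep⟩ := step h01 (hcyc 0)
    have hzero : ((0 : Fin (n + 1)).castSucc : Fin (n + 2)) = 0 := Fin.castSucc_zero
    rw [hzero] at hg0mem hstep
    have hc'0 : c' 0 = c (0 : Fin (n + 1)).succ := rfl
    have hle : c 0 ≤ c' 0 := by
      rw [hc'0]
      exact hmono (by simp [Fin.le_def])
    refine ⟨Fin.cons g0 g', ?_, ?_⟩
    · intro i
      refine Fin.cases ?_ ?_ i
      · simpa using hg0mem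
      · intro j
        simpa using perp_antitone hle (hg'mem j)
    · apply le_antisymm
      · refine hstep.trans ?_
        rw [← hc'0, hg']
        apply sup_le
        · apply Subgroup.closure_mono
          intro x hx
          obtain ⟨j, rfl⟩ := hx
          exact ⟨j.succ, by simp⟩
        · apply Subgroup.closure_mono
          intro x hx
          rw [Set.mem_singleton_iff] at hx
          exact ⟨0, by simp [hx]⟩
      · rw [Subgroup.closure_le]
        intro x hx
        obtain ⟨j, rfl⟩ := hx
        refine Fin.cases ?_ ?_ j
        · simpa using hg0mem
        · intro i
          simpa using perp_antitone hle (hg'mem i)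

end CoPolyAux

theorem count_copolycyclic_subgroups_le_index_pow (U : Type*) [CommGroup U] [Finite U]
    (F : Subgroup U) (ℓ : ℕ) (hℓ : 1 ≤ ℓ) :
    Nat.card {V : Subgroup U // F ≤ V ∧ ∃ c : Fin (ℓ + 1) → Subgroup U,
      Monotone c ∧ c 0 = V ∧ c (Fin.last ℓ) = ⊤ ∧
      ∀ i : Fin ℓ, IsCyclic
        (↥(c i.succ) ⧸ (c i.castSucc).subgroupOf (c i.succ))} ≤ F.index ^ ℓ := by
  classical
  have := CoPolyAux.enough U
  obtain ⟨eU⟩ := CommGroup.monoidHom_mulEquiv_of_hasEnoughRootsOfUnity U ℂ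
  haveI hfin : Finite (U →* ℂˣ) := Finite.of_equiv U eU.symm.toEquiv
  have key : ∀ V : {V : Subgroup U // F ≤ V ∧ ∃ c : Fin (ℓ + 1) → Subgroup U,
      Monotone c ∧ c 0 = V ∧ c (Fin.last ℓ) = ⊤ ∧
      ∀ i : Fin ℓ, IsCyclic
        (↥(c i.succ) ⧸ (c i.castSucc).subgroupOf (c i.succ))},
      ∃ g : Fin ℓ → ↥(CoPolyAux.perp F),
        CoPolyAux.perp (V : Subgroup U)
          = Subgroup.closure (Set.range (fun i => ((g i : U →* ℂˣ)))) := by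
    rintro ⟨V, hFV, c, hmono, hc0, htop, hcyc⟩
    obtain ⟨g, hmem, hgen⟩ := CoPolyAux.chain_gen ℓ c hmono htop hcyc
    refine ⟨fun i => ⟨g i, CoPolyAux.perp_antitone hFV (hc0 ▸ hmem i)⟩, ?_⟩
    simp only
    rw [← hc0]
    exact hgen
  choose gfun hgfun using key
  have hinj : Function.Injective gfun := by
    intro V W h
    apply Subtype.ext
    apply CoPolyAux.perp_inj
    rw [hgfun V, hgfun W, h]
  calc Nat.card _ ≤ Nat.card (Fin ℓ → ↥(CoPolyAux.perp F)) :=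
        Nat.card_le_card_of_injective _ hinj
    _ = Nat.card ↥(CoPolyAux.perp F) ^ ℓ := by
        rw [Nat.card_fun]; simp
    _ = F.index ^ ℓ := by rw [CoPolyAux.card_perp]
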